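/- Let κ be an infinite cardinal. A hypergraph (X, 𝔉) is kaleidoscopical provided that: (1) |𝔉| ≤ κ and |F| = κ for each F ∈ 𝔉; (2) for any subfamily 𝔄 ⊆ 𝔉 of cardinality |𝔄| < κ and any subset B ⊆ X \ (⋃𝔄) of cardinality |B| < κ, the intersection St(B, 𝔉) ∩ (⋃𝔄) has cardinality less than κ. -/

import Mathlib

open Cardinal Set

universe u

/-- The star `St(B, 𝔉) = ⋃ {St(b, 𝔉) : b ∈ B}` where `St(x, 𝔉) = ⋃ {F ∈ 𝔉 : x ∈ F}`;
equivalently, the union of all hyperedges that meet `B`. -/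
def SetStar {X : Type u} (𝔉 : Set (Set X)) (B : Set X) : Set X :=
  ⋃₀ {F | F ∈ 𝔉 ∧ (F ∩ B).Nonempty}

namespace Stmt8Aux

open Classical

variable {X C : Type u}

/-- One step of the construction. -/
noncomputable def pick (𝔉 : Set (Set X)) (t : (Set X × C) ⊕ X) (D : Set (X × C)) :
    Option (X × C) :=
  match t with
  | .inl (F, c) =>
      if h : ∃ x, x ∈ F ∧ (∀ c', (x, c') ∉ D) ∧ x ∉ SetStar 𝔉 {y | (y, c) ∈ D} then
        some (h.choose, c)
      else none
  | .inr y =>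
      if h : (∀ c', (y, c') ∉ D) ∧ ∃ c : C, ∀ z G, G ∈ 𝔉 → y ∈ G → z ∈ G → (z, c) ∉ D then
        some (y, h.2.choose)
      else none

variable (κ : Cardinal.{u}) (𝔉 : Set (Set X)) (e : κ.ord.ToType → (Set X × C) ⊕ X)

noncomputable def f : κ.ord.ToType → Option (X × C) :=
  fun i => (IsWellFounded.wf (r := ((· < ·) : κ.ord.ToType → κ.ord.ToType → Prop))).fix
    (fun i ih => pick 𝔉 (e i) {p | ∃ j, ∃ h : j < i, ih j h = some p}) i

def Dset (i : κ.ord.ToType) : Set (X × C) := {p | ∃ j, ∃ _ : j < i, f κ 𝔉 e j = some p}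

def Dfull : Set (X × C) := {p | ∃ j, f κ 𝔉 e j = some p}

lemma f_eq (i) : f κ 𝔉 e i = pick 𝔉 (e i) (Dset κ 𝔉 e i) :=
  WellFounded.fix_eq _ _ i

lemma sound {i : κ.ord.ToType} {x : X} {c : C} (hfi : f κ 𝔉 e i = some (x, c)) :
    (∀ c', (x, c') ∉ Dset κ 𝔉 e i) ∧
      ∀ G ∈ 𝔉, x ∈ G → ∀ z ∈ G, (z, c) ∉ Dset κ 𝔉 e i := by
  rw [f_eq] at hfi
  rcases he : e i with ⟨F, c0⟩ | y <;> rw [he] at hfi <;> simp only [pick] at hfi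
  · by_cases h : ∃ x', x' ∈ F ∧ (∀ c', (x', c') ∉ Dset κ 𝔉 e i) ∧
        x' ∉ SetStar 𝔉 {y | (y, c0) ∈ Dset κ 𝔉 e i}
    · rw [dif_pos h] at hfi
      obtain ⟨hxF, hfresh, hstar⟩ := h.choose_spec
      obtain ⟨hx, hc⟩ := Prod.mk.injEq .. ▸ Option.some.inj hfi
      subst hx; subst hc
      refine ⟨hfresh, fun G hG hxG z hzG hz => hstar ?_⟩
      exact ⟨G, ⟨hG, ⟨z, hzG, hz⟩⟩, hxG⟩
    · rw [dif_neg h] at hfi; cases hfi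
  · by_cases h : (∀ c', (y, c') ∉ Dset κ 𝔉 e i) ∧
        ∃ c1 : C, ∀ z G, G ∈ 𝔉 → y ∈ G → z ∈ G → (z, c1) ∉ Dset κ 𝔉 e i
    · rw [dif_pos h] at hfi
      obtain ⟨hx, hc⟩ := Prod.mk.injEq .. ▸ Option.some.inj hfi
      subst hx; subst hc
      exact ⟨h.1, fun G hG hxG z hzG => h.2.choose_spec z G hG hxG hzG⟩
    · rw [dif_neg h] at hfi; cases hfi

lemma good_func {x : X} {c c' : C} (h1 : (x, c) ∈ Dfull κ 𝔉 e)
    (h2 : (x, c') ∈ Dfull κ 𝔉 e) : c = c' := by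
  obtain ⟨i, hi⟩ := h1; obtain ⟨j, hj⟩ := h2
  rcases lt_trichotomy i j with h | h | h
  · exact absurd ⟨i, h, hi⟩ ((sound κ 𝔉 e hj).1 c)
  · subst h; rw [hi] at hj
    exact (Prod.mk.injEq .. ▸ Option.some.inj hj).2
  · exact absurd ⟨j, h, hj⟩ ((sound κ 𝔉 e hi).1 c')

lemma good_sep {x y : X} {c : C} {G : Set X} (hx : (x, c) ∈ Dfull κ 𝔉 e)
    (hy : (y, c) ∈ Dfull κ 𝔉 e) (hG : G ∈ 𝔉) (hxG : x ∈ G) (hyG : y ∈ G) : x = y := by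
  obtain ⟨i, hi⟩ := hx; obtain ⟨j, hj⟩ := hy
  rcases lt_trichotomy i j with h | h | h
  · exact absurd ⟨i, h, hi⟩ ((sound κ 𝔉 e hj).2 G hG hyG x hxG)
  · subst h; rw [hi] at hj
    exact (Prod.mk.injEq .. ▸ Option.some.inj hj).1
  · exact absurd ⟨j, h, hj⟩ ((sound κ 𝔉 e hi).2 G hG hxG y hyG)

lemma card_Dset (i : κ.ord.ToType) : #(Dset κ 𝔉 e i) < κ := by
  refine lt_of_le_of_lt ?_ (Cardinal.mk_Iio_ord_toType i)
  have hch : ∀ p : Dset κ 𝔉 e i, ∃ j, ∃ _ : j < i, f κ 𝔉 e j = some p.1 := fun p => p.2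
  choose g hg1 hg2 using hch
  refine mk_le_of_injective (f := fun p => (⟨g p, hg1 p⟩ : Iio i)) ?_
  intro p q h
  have : g p = g q := congrArg Subtype.val h
  apply Subtype.ext
  have := (hg2 p).symm.trans (this ▸ hg2 q)
  exact Option.some.inj this

lemma card_fiber (i : κ.ord.ToType) (c : C) : #{y | (y, c) ∈ Dset κ 𝔉 e i} < κ := by
  refine lt_of_le_of_lt ?_ (card_Dset κ 𝔉 e i)
  refine mk_le_of_injective (f := fun y : {y | (y, c) ∈ Dset κ 𝔉 e i} =>
    (⟨(y.1, c), y.2⟩ : Dset κ 𝔉 e i)) ?_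
  intro a b h
  exact Subtype.ext (congrArg (Prod.fst ∘ Subtype.val) h)

lemma card_pts (i : κ.ord.ToType) : #{x | ∃ c, (x, c) ∈ Dset κ 𝔉 e i} < κ := by
  refine lt_of_le_of_lt ?_ (card_Dset κ 𝔉 e i)
  have hch : ∀ x : {x | ∃ c, (x, c) ∈ Dset κ 𝔉 e i}, ∃ c, (x.1, c) ∈ Dset κ 𝔉 e i :=
    fun x => x.2
  choose g hg using hch
  refine mk_le_of_injective (f := fun x => (⟨(x.1, g x), hg x⟩ : Dset κ 𝔉 e i)) ?_
  intro a b h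
  exact Subtype.ext (congrArg (Prod.fst ∘ Subtype.val) h)

lemma tc1 (hκ : ℵ₀ ≤ κ)
    (h1' : ∀ F ∈ 𝔉, #F = κ)
    (h2 : ∀ 𝔄 ⊆ 𝔉, #𝔄 < κ → ∀ B : Set X, B ⊆ (⋃₀ 𝔄)ᶜ → #B < κ →
        #↥(SetStar 𝔉 B ∩ ⋃₀ 𝔄) < κ)
    {i : κ.ord.ToType} {F : Set X} {c : C} (hF : F ∈ 𝔉) (hi : e i = .inl (F, c)) :
    ∃ x ∈ F, (x, c) ∈ Dfull κ 𝔉 e := by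
  by_cases hcF : ∃ y ∈ F, (y, c) ∈ Dset κ 𝔉 e i
  · obtain ⟨y, hyF, j, _, hfj⟩ := hcF
    exact ⟨y, hyF, j, hfj⟩
  · push_neg at hcF
    have hguard : ∃ x, x ∈ F ∧ (∀ c', (x, c') ∉ Dset κ 𝔉 e i) ∧
        x ∉ SetStar 𝔉 {y | (y, c) ∈ Dset κ 𝔉 e i} := by
      set Cc := {y | (y, c) ∈ Dset κ 𝔉 e i} with hCcdef
      have hCc : #Cc < κ := card_fiber κ 𝔉 e i c
      have hCcF : Cc ⊆ (⋃₀ ({F} : Set (Set X)))ᶜ := by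
        rw [sUnion_singleton]
        intro y hy hyF
        exact hcF y hyF hy
      have hA : #({F} : Set (Set X)) < κ := by
        rw [mk_singleton]
        exact lt_of_lt_of_le one_lt_aleph0 hκ
      have hstar : #↥(SetStar 𝔉 Cc ∩ ⋃₀ ({F} : Set (Set X))) < κ :=
        h2 {F} (singleton_subset_iff.2 hF) hA Cc hCcF hCc
      rw [sUnion_singleton] at hstar
      have hP : #{x | ∃ c', (x, c') ∈ Dset κ 𝔉 e i} < κ := card_pts κ 𝔉 e i
      by_contra hcon
      push_neg at hcon
      have hsub : F ⊆ {x | ∃ c', (x, c') ∈ Dset κ 𝔉 e i} ∪ (SetStar 𝔉 Cc ∩ F) := by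
        intro x hx
        by_cases h' : ∀ c', (x, c') ∉ Dset κ 𝔉 e i
        · exact Or.inr ⟨hcon x hx h', hx⟩
        · push_neg at h'
          exact Or.inl h'
      have hle := (mk_le_mk_of_subset hsub).trans (mk_union_le _ _)
      rw [h1' F hF] at hle
      exact absurd hle (not_le.2 (Cardinal.add_lt_of_lt hκ hP hstar))
    refine ⟨hguard.choose, hguard.choose_spec.1, i, ?_⟩
    rw [f_eq, hi]
    simp only [pick]
    exact dif_pos hguard

lemma tc2 (hC : #C = κ) {i : κ.ord.ToType} {y : X} (hi : e i = .inr y) :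
    ∃ c, (y, c) ∈ Dfull κ 𝔉 e := by
  by_cases hy : ∃ c', (y, c') ∈ Dset κ 𝔉 e i
  · obtain ⟨c', j, _, hfj⟩ := hy
    exact ⟨c', j, hfj⟩
  · push_neg at hy
    have hex : ∃ c : C, ∀ z G, G ∈ 𝔉 → y ∈ G → z ∈ G → (z, c) ∉ Dset κ 𝔉 e i := by
      set Bad := {c : C | ∃ z, (z, c) ∈ Dset κ 𝔉 e i ∧ ∃ G ∈ 𝔉, y ∈ G ∧ z ∈ G} with hBad
      have hble : #Bad < #C := by
        rw [hC]
        refine lt_of_le_of_lt ?_ (card_Dset κ 𝔉 e i)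
        have hch : ∀ c : Bad, ∃ z, (z, c.1) ∈ Dset κ 𝔉 e i := fun c => by
          obtain ⟨z, hz, _⟩ := c.2; exact ⟨z, hz⟩
        choose g hg using hch
        refine mk_le_of_injective (f := fun c => (⟨(g c, c.1), hg c⟩ : Dset κ 𝔉 e i)) ?_
        intro a b h
        exact Subtype.ext (congrArg (Prod.snd ∘ Subtype.val) h)
      have hne : Bad ≠ Set.univ := by
        intro h
        rw [h, mk_univ] at hble
        exact lt_irrefl _ hble
      obtain ⟨c, hc⟩ := (ne_univ_iff_exists_notMem _).1 hne
      exact ⟨c, fun z G hG hyG hzG hzD => hc ⟨z, hzD, G, hG, hyG, hzG⟩⟩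
    have hguard : (∀ c', (y, c') ∉ Dset κ 𝔉 e i) ∧
        ∃ c : C, ∀ z G, G ∈ 𝔉 → y ∈ G → z ∈ G → (z, c) ∉ Dset κ 𝔉 e i := ⟨hy, hex⟩
    refine ⟨hguard.2.choose, i, ?_⟩
    rw [f_eq, hi]
    simp only [pick]
    exact dif_pos hguard

end Stmt8Aux

theorem stmt8 {X : Type u} (κ : Cardinal.{u}) (hκ : ℵ₀ ≤ κ)
    (𝔉 : Set (Set X))
    (h1 : #𝔉 ≤ κ) (h1' : ∀ F ∈ 𝔉, #F = κ)
    (h2 : ∀ 𝔄 ⊆ 𝔉, #𝔄 < κ → ∀ B : Set X, B ⊆ (⋃₀ 𝔄)ᶜ → #B < κ →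
        #↥(SetStar 𝔉 B ∩ ⋃₀ 𝔄) < κ) :
    ∃ (C : Type u) (χ : X → C), Function.Surjective χ ∧
      ∀ F ∈ 𝔉, Set.BijOn χ F Set.univ := by
  classical
  rcases Set.eq_empty_or_nonempty 𝔉 with h𝔉 | ⟨F₀, hF₀⟩
  · exact ⟨X, id, Function.surjective_id, by simp [h𝔉]⟩
  set C : Type u := κ.out with hCdef
  have hC : #C = κ := mk_out κ
  have hCne : Nonempty C := by
    rw [← mk_ne_zero_iff, hC]
    intro h
    rw [h] at hκ
    exact absurd hκ (not_le.2 aleph0_pos)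
  obtain ⟨c₀⟩ := hCne
  -- the task type
  have hUle : #(⋃₀ 𝔉 : Set X) ≤ κ := by
    refine (mk_sUnion_le 𝔉).trans ?_
    have : Nonempty ↥𝔉 := ⟨⟨F₀, hF₀⟩⟩
    have hsup : (⨆ s : ↥𝔉, #↥(s : Set X)) ≤ κ := ciSup_le' fun s => (h1' s s.2).le
    calc #↥𝔉 * (⨆ s : ↥𝔉, #↥(s : Set X)) ≤ κ * κ := mul_le_mul' h1 hsup
      _ = κ := mul_eq_self hκ
  have hT : #((↥𝔉 × C) ⊕ ↥(⋃₀ 𝔉 : Set X)) ≤ κ := by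
    rw [mk_sum, mk_prod, lift_id, lift_id, lift_id, lift_id]
    calc #↥𝔉 * #C + #↥(⋃₀ 𝔉 : Set X) ≤ κ * κ + κ :=
          add_le_add (mul_le_mul' h1 hC.le) hUle
      _ = κ + κ := by rw [mul_eq_self hκ]
      _ = κ := add_eq_self hκ
  have hTI : #((↥𝔉 × C) ⊕ ↥(⋃₀ 𝔉 : Set X)) ≤ #(κ.ord.ToType) := by
    rw [mk_ord_toType]; exact hT
  obtain ⟨emb⟩ := Cardinal.le_def _ _ |>.1 hTI
  have hTne : Nonempty ((↥𝔉 × C) ⊕ ↥(⋃₀ 𝔉 : Set X)) := ⟨.inl ⟨⟨F₀, hF₀⟩, c₀⟩⟩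
  let e : κ.ord.ToType → (Set X × C) ⊕ X :=
    fun i => Sum.map (fun p => ((p.1 : Set X), p.2)) Subtype.val (Function.invFun emb i)
  have he' : Function.Surjective (Function.invFun emb) :=
    Function.invFun_surjective emb.injective
  have hit1 : ∀ F ∈ 𝔉, ∀ c : C, ∃ i, e i = .inl (F, c) := by
    intro F hF c
    obtain ⟨i, hi⟩ := he' (.inl (⟨F, hF⟩, c))
    exact ⟨i, by simp [e, hi]⟩
  have hit2 : ∀ y ∈ (⋃₀ 𝔉 : Set X), ∃ i, e i = .inr y := by
    intro y hy
    obtain ⟨i, hi⟩ := he' (.inr ⟨y, hy⟩)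
    exact ⟨i, by simp [e, hi]⟩
  -- the coloring
  let χ : X → C := fun x => if h : ∃ c, (x, c) ∈ Stmt8Aux.Dfull κ 𝔉 e then h.choose else c₀
  have hχ : ∀ {x : X} {c : C}, (x, c) ∈ Stmt8Aux.Dfull κ 𝔉 e → χ x = c := by
    intro x c hxc
    have h : ∃ c, (x, c) ∈ Stmt8Aux.Dfull κ 𝔉 e := ⟨c, hxc⟩
    show dite _ _ _ = c
    rw [dif_pos h]
    exact Stmt8Aux.good_func κ 𝔉 e h.choose_spec hxc
  refine ⟨C, χ, ?_, ?_⟩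
  · intro c
    obtain ⟨i, hi⟩ := hit1 F₀ hF₀ c
    obtain ⟨x, _, hx⟩ := Stmt8Aux.tc1 κ 𝔉 e hκ h1' h2 hF₀ hi
    exact ⟨x, hχ hx⟩
  · intro F hF
    refine ⟨fun x _ => trivial, ?_, ?_⟩
    · intro x hx y hy hxy
      obtain ⟨i, hi⟩ := hit2 x ⟨F, hF, hx⟩
      obtain ⟨cx, hcx⟩ := Stmt8Aux.tc2 κ 𝔉 e hC hi
      obtain ⟨j, hj⟩ := hit2 y ⟨F, hF, hy⟩
      obtain ⟨cy, hcy⟩ := Stmt8Aux.tc2 κ 𝔉 e hC hj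
      have hcc : cx = cy := by rw [← hχ hcx, ← hχ hcy, hxy]
      subst hcc
      exact Stmt8Aux.good_sep κ 𝔉 e hcx hcy hF hx hy
    · intro c _
      obtain ⟨i, hi⟩ := hit1 F hF c
      obtain ⟨x, hxF, hx⟩ := Stmt8Aux.tc1 κ 𝔉 e hκ h1' h2 hF hi
      exact ⟨x, hxF, hχ hx⟩
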